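/- Let 0 < β < 1, let t be a β-balanced full binary tree with n leaves, let k ≥ 1, and let top(t,k) be the tree obtained from t by removing all nodes whose leaf size is at most k. Then the number of nodes of top(t,k) is at most 2·c·n/k, where c = 2·log_{1+β}(β⁻¹) + 2. -/

import Mathlib

universe u

/-- Full binary trees: every node carries a label and has either `0` or `2`
(ordered) children. -/
inductive BTree (L : Type u) : Type u
  | leaf : L → BTree L
  | node : L → BTree L → BTree L → BTree L

namespace BTree

/-- The number of leaves of a full binary tree. -/
def numLeaves {L : Type u} : BTree L → ℕ
  | .leaf _ => 1
  | .node _ l r => l.numLeaves + r.numLeaves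

/-- The subtree rooted at the node addressed by the position `p`
(`false` = go to the left child, `true` = go to the right child), if `p` is a
valid position. -/
def subt {L : Type u} : BTree L → List Bool → Option (BTree L)
  | t, [] => some t
  | .leaf _, _ :: _ => none
  | .node _ l r, b :: p => if b then r.subt p else l.subt p

/-- `p` addresses a node of `t`. -/
def IsNode {L : Type u} (t : BTree L) (p : List Bool) : Prop := (t.subt p).isSome

/-- `p` addresses an inner node of `t`. -/
def IsInner {L : Type u} (t : BTree L) (p : List Bool) : Prop :=
  ∃ (a : L) (l r : BTree L), t.subt p = some (.node a l r)

/-- The leaf size of the node of `t` addressed by `p`: the number of leaves of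
the subtree rooted there. -/
def leafSizeAt {L : Type u} (t : BTree L) (p : List Bool) : ℕ :=
  ((t.subt p).map numLeaves).getD 0

/-- The inner node of `t` addressed by `p` is `β`-balanced: its two children
have leaf sizes `n₁, n₂` with `n₁ ≥ β·n₂` and `n₂ ≥ β·n₁`. -/
def BalancedAt {L : Type u} (β : ℝ) (t : BTree L) (p : List Bool) : Prop :=
  ∃ (a : L) (l r : BTree L), t.subt p = some (.node a l r) ∧
    β * (l.numLeaves : ℝ) ≤ (r.numLeaves : ℝ) ∧
    β * (r.numLeaves : ℝ) ≤ (l.numLeaves : ℝ)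

/-- A tree is `β`-balanced if for all inner nodes `u`, `v` such that `v` is a
child of `u`, at least one of `u`, `v` is `β`-balanced. -/
def BetaBalanced {L : Type u} (β : ℝ) (t : BTree L) : Prop :=
  ∀ (p : List Bool) (b : Bool), t.IsInner p → t.IsInner (p ++ [b]) →
    t.BalancedAt β p ∨ t.BalancedAt β (p ++ [b])

/-- `Subtree s t` holds iff `s` is the subtree of `t` rooted at some node
of `t`. -/
inductive Subtree {L : Type u} : BTree L → BTree L → Prop
  | refl (t : BTree L) : Subtree t t
  | left {s l r : BTree L} {a : L} : Subtree s l → Subtree s (.node a l r)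
  | right {s l r : BTree L} {a : L} : Subtree s r → Subtree s (.node a l r)

end BTree

namespace BTree

/-- `p` addresses a node of `top(t,k)`, i.e. a node of `t` whose leaf size
exceeds `k`. -/
def InTop {L : Type u} (t : BTree L) (k : ℕ) (p : List Bool) : Prop :=
  t.IsNode p ∧ k < t.leafSizeAt p

/-- `p` is a child of `q` in `top(t,k)`: both are nodes of `top(t,k)`, `q` is
a proper ancestor of `p`, and no node of `top(t,k)` lies strictly between
them. -/
def TopChild {L : Type u} (t : BTree L) (k : ℕ) (p q : List Bool) : Prop :=
  t.InTop k p ∧ t.InTop k q ∧ q <+: p ∧ q ≠ p ∧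
    ∀ x : List Bool, t.InTop k x → q <+: x → x <+: p → x = q ∨ x = p

/-- `p` is the unique child of `q` in `top(t,k)`. -/
def UniqueTopChild {L : Type u} (t : BTree L) (k : ℕ) (p q : List Bool) : Prop :=
  t.TopChild k p q ∧ ∀ x : List Bool, t.TopChild k x q → x = p

end BTree

namespace TopAux

open BTree

variable {L : Type u}

/-- Recursive count of the nodes of `top(t,k)`. -/
def cnt : BTree L → ℕ → ℕ
  | .leaf _, k => if k < 1 then 1 else 0
  | .node _ l r, k =>
      (if k < l.numLeaves + r.numLeaves then 1 else 0) + cnt l k + cnt r k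

lemma numLeaves_pos (t : BTree L) : 1 ≤ t.numLeaves := by
  induction t with
  | leaf _ => simp [numLeaves]
  | node a l r ihl ihr => simp [numLeaves]; omega

lemma cnt_eq_zero {t : BTree L} {k : ℕ} (h : t.numLeaves ≤ k) : cnt t k = 0 := by
  induction t with
  | leaf _ => simp only [numLeaves] at h; simp [cnt]; omega
  | node a l r ihl ihr =>
      simp only [numLeaves] at h
      have h1 : l.numLeaves ≤ k := by omega
      have h2 : r.numLeaves ≤ k := by omega
      simp [cnt, ihl h1, ihr h2]; omega

@[simp] lemma inTop_nil {t : BTree L} {k : ℕ} : t.InTop k [] ↔ k < t.numLeaves := by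
  simp [InTop, IsNode, leafSizeAt, subt]

@[simp] lemma inTop_leaf_cons {x : L} {k : ℕ} {b : Bool} {p : List Bool} :
    ¬ (BTree.leaf x).InTop k (b :: p) := by
  simp [InTop, IsNode, subt]

@[simp] lemma inTop_node_cons_false {a : L} {l r : BTree L} {k : ℕ} {p : List Bool} :
    (BTree.node a l r).InTop k (false :: p) ↔ l.InTop k p := by
  simp [InTop, IsNode, leafSizeAt, subt]

@[simp] lemma inTop_node_cons_true {a : L} {l r : BTree L} {k : ℕ} {p : List Bool} :
    (BTree.node a l r).InTop k (true :: p) ↔ r.InTop k p := by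
  simp [InTop, IsNode, leafSizeAt, subt]

lemma top_finite_card (k : ℕ) (t : BTree L) :
    {p : List Bool | t.InTop k p}.Finite ∧
      {p : List Bool | t.InTop k p}.ncard = cnt t k := by
  induction t with
  | leaf x =>
      have hset : {p : List Bool | (BTree.leaf x).InTop k p}
          = (if k < 1 then {([] : List Bool)} else (∅ : Set (List Bool))) := by
        ext p
        cases p with
        | nil => split <;> simp [numLeaves, *]
        | cons b q => split <;> simp
      rw [hset]
      split <;> simp [cnt, *]
  | node a l r ihl ihr =>
      obtain ⟨hfl, hcl⟩ := ihl
      obtain ⟨hfr, hcr⟩ := ihr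
      have hset : {p : List Bool | (BTree.node a l r).InTop k p}
          = (if k < l.numLeaves + r.numLeaves then {([] : List Bool)}
              else (∅ : Set (List Bool)))
            ∪ ((List.cons false '' {p | l.InTop k p})
                ∪ (List.cons true '' {p | r.InTop k p})) := by
        ext p
        cases p with
        | nil => split <;> simp [numLeaves, *]
        | cons b q => cases b <;> (split <;> simp)
      have hf1 : (if k < l.numLeaves + r.numLeaves then {([] : List Bool)}
          else (∅ : Set (List Bool))).Finite := by
        split <;> simp
      have hf2 : (List.cons false '' {p | l.InTop k p}).Finite := hfl.image _
      have hf3 : (List.cons true '' {p | r.InTop k p}).Finite := hfr.image _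
      have hd23 : Disjoint (List.cons false '' {p | l.InTop k p})
          (List.cons true '' {p | r.InTop k p}) := by
        rw [Set.disjoint_left]
        rintro x ⟨q, -, rfl⟩ ⟨q', -, h⟩
        simp at h
      have hd123 : Disjoint (if k < l.numLeaves + r.numLeaves then {([] : List Bool)}
            else (∅ : Set (List Bool)))
          ((List.cons false '' {p | l.InTop k p}) ∪ (List.cons true '' {p | r.InTop k p})) := by
        rw [Set.disjoint_left]
        intro x hx
        have hx' : x = [] := by revert hx; split <;> simp_all
        subst hx'
        rintro (⟨q, -, h⟩ | ⟨q, -, h⟩) <;> simp at h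
      constructor
      · rw [hset]; exact (hf1.union (hf2.union hf3))
      · rw [hset, Set.ncard_union_eq hd123 hf1 (hf2.union hf3),
          Set.ncard_union_eq hd23 hf2 hf3,
          Set.ncard_image_of_injective _ (List.cons_injective),
          Set.ncard_image_of_injective _ (List.cons_injective), hcl, hcr]
        have h9 : (if k < l.numLeaves + r.numLeaves then {([] : List Bool)}
            else (∅ : Set (List Bool))).ncard
            = (if k < l.numLeaves + r.numLeaves then 1 else 0) := by
          split <;> simp
        rw [h9]
        simp only [cnt]
        ring

lemma balancedAt_nil_node {β : ℝ} {a : L} {l r : BTree L} :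
    BalancedAt β (BTree.node a l r) []
      ↔ (β * (l.numLeaves : ℝ) ≤ (r.numLeaves : ℝ)
          ∧ β * (r.numLeaves : ℝ) ≤ (l.numLeaves : ℝ)) := by
  constructor
  · rintro ⟨a', l', r', h, h1, h2⟩
    simp only [subt, Option.some.injEq, BTree.node.injEq] at h
    obtain ⟨rfl, rfl, rfl⟩ := h
    exact ⟨h1, h2⟩
  · rintro ⟨h1, h2⟩
    exact ⟨a, l, r, rfl, h1, h2⟩

lemma balancedAt_cons_false {β : ℝ} {a : L} {l r : BTree L} {p : List Bool} :
    BalancedAt β (BTree.node a l r) (false :: p) ↔ BalancedAt β l p := by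
  simp [BalancedAt, subt]

lemma balancedAt_cons_true {β : ℝ} {a : L} {l r : BTree L} {p : List Bool} :
    BalancedAt β (BTree.node a l r) (true :: p) ↔ BalancedAt β r p := by
  simp [BalancedAt, subt]

lemma isInner_cons_false {a : L} {l r : BTree L} {p : List Bool} :
    (BTree.node a l r).IsInner (false :: p) ↔ l.IsInner p := by
  simp [IsInner, subt]

lemma isInner_cons_true {a : L} {l r : BTree L} {p : List Bool} :
    (BTree.node a l r).IsInner (true :: p) ↔ r.IsInner p := by
  simp [IsInner, subt]

lemma betaBalanced_left {β : ℝ} {a : L} {l r : BTree L}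
    (h : BetaBalanced β (BTree.node a l r)) : BetaBalanced β l := by
  intro p b h1 h2
  have h1' : (BTree.node a l r).IsInner (false :: p) := isInner_cons_false.mpr h1
  have h2' : (BTree.node a l r).IsInner ((false :: p) ++ [b]) := by
    rw [List.cons_append]; exact isInner_cons_false.mpr h2
  rcases h (false :: p) b h1' h2' with hb | hb
  · exact Or.inl (balancedAt_cons_false.mp hb)
  · right
    rw [List.cons_append] at hb
    exact balancedAt_cons_false.mp hb

lemma betaBalanced_right {β : ℝ} {a : L} {l r : BTree L}
    (h : BetaBalanced β (BTree.node a l r)) : BetaBalanced β r := by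
  intro p b h1 h2
  have h1' : (BTree.node a l r).IsInner (true :: p) := isInner_cons_true.mpr h1
  have h2' : (BTree.node a l r).IsInner ((true :: p) ++ [b]) := by
    rw [List.cons_append]; exact isInner_cons_true.mpr h2
  rcases h (true :: p) b h1' h2' with hb | hb
  · exact Or.inl (balancedAt_cons_true.mp hb)
  · right
    rw [List.cons_append] at hb
    exact balancedAt_cons_true.mp hb

/-- The key quantitative induction. -/
lemma key (β c : ℝ) (hβ0 : 0 < β) (hc2 : 2 ≤ c) (hcb : 1 ≤ c * β)
    (k : ℕ) (hk : 1 ≤ k) :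
    ∀ n : ℕ, ∀ t : BTree L, BetaBalanced β t → t.numLeaves = n → k < n →
      ((cnt t k : ℝ) ≤ 2 * c / k * n - c)
        ∧ (BalancedAt β t [] → (cnt t k : ℝ) ≤ 2 * c / k * n - c - 1) := by
  intro n
  induction n using Nat.strong_induction_on with
  | _ n IH =>
    intro t hbal hn hkn
    have hkR : (0 : ℝ) < k := by exact_mod_cast Nat.lt_of_lt_of_le Nat.zero_lt_one hk
    cases t with
    | leaf x => simp [numLeaves] at hn; omega
    | node a l r =>
      simp only [numLeaves] at hn
      have h1p : 1 ≤ l.numLeaves := numLeaves_pos l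
      have h2p : 1 ≤ r.numLeaves := numLeaves_pos r
      have hcnt : cnt (BTree.node a l r) k = 1 + cnt l k + cnt r k := by
        simp only [cnt]
        rw [if_pos (by omega)]
      have hball : BetaBalanced β l := betaBalanced_left hbal
      have hbalr : BetaBalanced β r := betaBalanced_right hbal
      have IHl : k < l.numLeaves → ((cnt l k : ℝ) ≤ 2 * c / k * l.numLeaves - c)
          ∧ (BalancedAt β l [] → (cnt l k : ℝ) ≤ 2 * c / k * l.numLeaves - c - 1) :=
        fun h => IH l.numLeaves (by omega) l hball rfl h
      have IHr : k < r.numLeaves → ((cnt r k : ℝ) ≤ 2 * c / k * r.numLeaves - c)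
          ∧ (BalancedAt β r [] → (cnt r k : ℝ) ≤ 2 * c / k * r.numLeaves - c - 1) :=
        fun h => IH r.numLeaves (by omega) r hbalr rfl h
      have hcpos : (0 : ℝ) < 2 * c / k := by positivity
      have hnlarge : (k : ℝ) + 1 ≤ (n : ℝ) := by exact_mod_cast hkn
      have hsum : 2 * c / k * (l.numLeaves : ℝ) + 2 * c / k * (r.numLeaves : ℝ)
          = 2 * c / k * n := by
        rw [← hn]; push_cast; ring
      have hlin : 2 * c + 2 * c / k ≤ 2 * c / k * n := by
        have h1 : 2 * c / k * ((k : ℝ) + 1) ≤ 2 * c / k * n :=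
          mul_le_mul_of_nonneg_left hnlarge (le_of_lt hcpos)
        have h2 : 2 * c / k * ((k : ℝ) + 1) = 2 * c + 2 * c / k := by
          field_simp
        linarith
      -- the balanced-root bound
      have main2 : BalancedAt β (BTree.node a l r) []
          → (cnt (BTree.node a l r) k : ℝ) ≤ 2 * c / k * n - c - 1 := by
        intro hb0
        obtain ⟨hb1, hb2⟩ := balancedAt_nil_node.mp hb0
        rw [hcnt]
        push_cast
        by_cases hl : k < l.numLeaves <;> by_cases hr : k < r.numLeaves
        · have e1 := (IHl hl).1
          have e2 := (IHr hr).1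
          linarith
        · -- n2 ≤ k < n1 : chain step, root balanced
          have e1 := (IHl hl).1
          have e2 : cnt r k = 0 := cnt_eq_zero (by omega)
          have hkn1 : (k : ℝ) < (l.numLeaves : ℝ) := by exact_mod_cast hl
          have hbk : β * k ≤ (r.numLeaves : ℝ) := by nlinarith
          have h3 : 2 * c * β ≤ 2 * c / k * r.numLeaves := by
            have h5 : 2 * c / k * (β * k) ≤ 2 * c / k * r.numLeaves :=
              mul_le_mul_of_nonneg_left hbk (le_of_lt hcpos)
            have h4 : 2 * c / k * (β * k) = 2 * c * β := by
              field_simp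
            linarith
          have h5 : (2:ℝ) ≤ 2 * c * β := by nlinarith
          rw [e2]
          push_cast
          linarith
        · -- n1 ≤ k < n2 : symmetric
          have e1 := (IHr hr).1
          have e2 : cnt l k = 0 := cnt_eq_zero (by omega)
          have hkn2 : (k : ℝ) < (r.numLeaves : ℝ) := by exact_mod_cast hr
          have hbk : β * k ≤ (l.numLeaves : ℝ) := by nlinarith
          have h3 : 2 * c * β ≤ 2 * c / k * l.numLeaves := by
            have h5 : 2 * c / k * (β * k) ≤ 2 * c / k * l.numLeaves :=
              mul_le_mul_of_nonneg_left hbk (le_of_lt hcpos)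
            have h4 : 2 * c / k * (β * k) = 2 * c * β := by
              field_simp
            linarith
          have h5 : (2:ℝ) ≤ 2 * c * β := by nlinarith
          rw [e2]
          push_cast
          linarith
        · -- both small : top leaf
          have e1 : cnt l k = 0 := cnt_eq_zero (by omega)
          have e2 : cnt r k = 0 := cnt_eq_zero (by omega)
          rw [e1, e2]
          push_cast
          linarith
      refine ⟨?_, main2⟩
      by_cases hb0 : BalancedAt β (BTree.node a l r) []
      · linarith [main2 hb0]
      · rw [hcnt]
        push_cast
        by_cases hl : k < l.numLeaves <;> by_cases hr : k < r.numLeaves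
        · have e1 := (IHl hl).1
          have e2 := (IHr hr).1
          linarith
        · -- n2 ≤ k < n1 : chain step, root unbalanced, so l's root is balanced
          have e2 : cnt r k = 0 := cnt_eq_zero (by omega)
          have hlb : BalancedAt β l [] := by
            obtain ⟨a', l', r', rfl⟩ : ∃ a' l' r', l = BTree.node a' l' r' := by
              cases l with
              | leaf x => simp [numLeaves] at h1p hl ⊢; omega
              | node a' l' r' => exact ⟨a', l', r', rfl⟩
            have hi1 : (BTree.node a (BTree.node a' l' r') r).IsInner [] :=
              ⟨a, BTree.node a' l' r', r, rfl⟩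
            have hi2 : (BTree.node a (BTree.node a' l' r') r).IsInner ([] ++ [false]) := by
              simp only [List.nil_append]
              exact isInner_cons_false.mpr ⟨a', l', r', rfl⟩
            rcases hbal [] false hi1 hi2 with hb | hb
            · exact absurd hb hb0
            · simp only [List.nil_append] at hb
              exact balancedAt_cons_false.mp hb
          have e1 := (IHl hl).2 hlb
          rw [e2]
          push_cast
          have h6 : 0 ≤ 2 * c / k * (r.numLeaves : ℝ) := by positivity
          linarith
        · -- n1 ≤ k < n2 : symmetric
          have e2 : cnt l k = 0 := cnt_eq_zero (by omega)
          have hlb : BalancedAt β r [] := by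
            obtain ⟨a', l', r', rfl⟩ : ∃ a' l' r', r = BTree.node a' l' r' := by
              cases r with
              | leaf x => simp [numLeaves] at h2p hr ⊢; omega
              | node a' l' r' => exact ⟨a', l', r', rfl⟩
            have hi1 : (BTree.node a l (BTree.node a' l' r')).IsInner [] :=
              ⟨a, l, BTree.node a' l' r', rfl⟩
            have hi2 : (BTree.node a l (BTree.node a' l' r')).IsInner ([] ++ [true]) := by
              simp only [List.nil_append]
              exact isInner_cons_true.mpr ⟨a', l', r', rfl⟩
            rcases hbal [] true hi1 hi2 with hb | hb
            · exact absurd hb hb0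
            · simp only [List.nil_append] at hb
              exact balancedAt_cons_true.mp hb
          have e1 := (IHr hr).2 hlb
          rw [e2]
          push_cast
          have h6 : 0 ≤ 2 * c / k * (l.numLeaves : ℝ) := by positivity
          linarith
        · have e1 : cnt l k = 0 := cnt_eq_zero (by omega)
          have e2 : cnt r k = 0 := cnt_eq_zero (by omega)
          rw [e1, e2]
          push_cast
          linarith

lemma c_beta_ge_one {β : ℝ} (hβ0 : 0 < β) (hβ1 : β < 1) :
    1 ≤ (2 * Real.logb (1 + β) β⁻¹ + 2) * β := by
  have hlogb_pos : 0 < Real.log (1 + β) := Real.log_pos (by linarith)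
  have hβinv1 : 1 < β⁻¹ := (one_lt_inv_iff₀).mpr ⟨hβ0, hβ1⟩
  have hℓ0 : 0 ≤ Real.logb (1 + β) β⁻¹ :=
    le_of_lt (Real.logb_pos (by linarith) hβinv1)
  by_cases hβhalf : (1:ℝ)/2 ≤ β
  · nlinarith
  · -- β < 1/2
    have h2β : (2:ℝ) ≤ β⁻¹ := by
      rw [le_inv_comm₀ (by norm_num) hβ0]
      linarith
    have hlog2 : Real.log 2 ≤ Real.log β⁻¹ :=
      Real.log_le_log (by norm_num) h2β
    have hlog1β : Real.log (1 + β) ≤ β := by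
      have := Real.log_le_sub_one_of_pos (show (0:ℝ) < 1 + β by linarith)
      linarith
    have hlog2pos : (0.6931471803 : ℝ) < Real.log 2 := Real.log_two_gt_d9
    have hℓ : Real.log 2 / β ≤ Real.logb (1 + β) β⁻¹ := by
      rw [Real.logb]
      exact div_le_div₀ (by linarith) hlog2 hlogb_pos hlog1β
    have hcan : Real.log 2 / β * β = Real.log 2 :=
      div_mul_cancel₀ _ (ne_of_gt hβ0)
    nlinarith [mul_le_mul_of_nonneg_right hℓ (le_of_lt hβ0)]

end TopAux

/-- The tree `top(t,k)` obtained from a `β`-balanced full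
binary tree `t` with `n` leaves by removing all nodes of leaf size at most `k`
has at most `2·c·n/k` nodes, where `c = 2·log_{1+β}(β⁻¹) + 2`. -/
theorem top_tree_small (β : ℝ) (hβ0 : 0 < β) (hβ1 : β < 1)
    (L : Type) (t : BTree L) (hbal : BTree.BetaBalanced β t)
    (n : ℕ) (hn : t.numLeaves = n) (k : ℕ) (hk : 1 ≤ k) :
    ({p : List Bool | t.InTop k p}.ncard : ℝ) ≤
      2 * (2 * Real.logb (1 + β) β⁻¹ + 2) * (n : ℝ) / (k : ℝ) := by
  classical
  subst hn
  set c : ℝ := 2 * Real.logb (1 + β) β⁻¹ + 2 with hc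
  have hℓ0 : 0 < Real.logb (1 + β) β⁻¹ :=
    Real.logb_pos (by linarith) ((one_lt_inv_iff₀).mpr ⟨hβ0, hβ1⟩)
  have hc2 : 2 ≤ c := by rw [hc]; linarith
  have hcb : 1 ≤ c * β := TopAux.c_beta_ge_one hβ0 hβ1
  have hkR : (0 : ℝ) < k := by
    have : 0 < k := hk
    exact_mod_cast this
  obtain ⟨hfin, hcard⟩ := TopAux.top_finite_card k t
  rw [hcard]
  by_cases hkn : k < t.numLeaves
  · have hmain := (TopAux.key β c hβ0 hc2 hcb k hk t.numLeaves t hbal rfl hkn).1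
    have hrw : 2 * c * (t.numLeaves : ℝ) / k = 2 * c / k * t.numLeaves := by ring
    rw [hrw]
    linarith
  · rw [TopAux.cnt_eq_zero (by omega)]
    push_cast
    apply div_nonneg _ (le_of_lt hkR)
    have : (0:ℝ) ≤ 2 * c := by linarith
    positivity
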